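/- Let $k : V \times V \to \mathbb{C}$ be positive definite on countable $V$ with RKHS $\mathscr{H}$ satisfying $\delta_x \in \mathscr{H}$ for all $x \in V$, and let $(A,B)$ be the associated symmetric pair ($A\delta_x = \delta_x$, $Bk_x = \delta_x$). Then $k_x \in \mathrm{dom}(B^* \overline{B})$ for all $x \in V$; equivalently, $\delta_x \in \mathrm{dom}(B^*)$ for every $x \in V$. -/

import Mathlib

/-- Let `k` be positive definite on countable `V` with RKHS `H`
(kernel vectors `K x`, dense span) containing all point masses (`D x`
represents `δ_x`: `⟪K y, D x⟫ = δ_{xy}`), and let `(A, B)` be the associated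
symmetric pair (`B k_x = δ_x` on `dom B = span{k_x}`). Then
`k_x ∈ dom (B* ∘ closure B)` for every `x`; equivalently `δ_x ∈ dom B*`, i.e.
there is `C < ∞` with `|⟨δ_x, B f⟩_{ℓ²}|² ≤ C ‖f‖²_H` for all
`f = ∑ η y • k_y ∈ dom B` (where `⟨δ_x, B f⟩_{ℓ²} = η x`). -/
theorem stmt_11 {V H : Type*} [Countable V] [DecidableEq V]
    [NormedAddCommGroup H] [InnerProductSpace ℂ H] [CompleteSpace H]
    (k : V → V → ℂ) (K : V → H)
    (hk : ∀ x y, (inner ℂ (K x) (K y) : ℂ) = k x y)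
    (hdense : (Submodule.span ℂ (Set.range K)).topologicalClosure = ⊤)
    (D : V → H)
    (hD : ∀ x y, (inner ℂ (K y) (D x) : ℂ) = if y = x then 1 else 0)
    (x : V) :
    ∃ C : ℝ, ∀ η : V →₀ ℂ,
      ‖η x‖ ^ 2 ≤ C * ‖∑ y ∈ η.support, η y • K y‖ ^ 2 := by
  refine ⟨‖D x‖ ^ 2, fun η => ?_⟩
  set f := ∑ y ∈ η.support, η y • K y with hf
  have key : (inner ℂ f (D x) : ℂ) = starRingEnd ℂ (η x) := by
    rw [hf, sum_inner]
    have h1 : ∀ y ∈ η.support,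
        (inner ℂ (η y • K y) (D x) : ℂ)
          = if y = x then starRingEnd ℂ (η y) else 0 := by
      intro y hy
      rw [inner_smul_left, hD]
      split <;> simp
    rw [Finset.sum_congr rfl h1, Finset.sum_ite_eq' η.support x]
    split
    · rfl
    · simp [Finsupp.notMem_support_iff.mp ‹_›]
  have h2 : ‖η x‖ ≤ ‖f‖ * ‖D x‖ := by
    calc ‖η x‖ = ‖(inner ℂ f (D x) : ℂ)‖ := by rw [key]; simp
    _ ≤ ‖f‖ * ‖D x‖ := norm_inner_le_norm f (D x)
  calc ‖η x‖ ^ 2 ≤ (‖f‖ * ‖D x‖) ^ 2 := by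
        apply pow_le_pow_left₀ (norm_nonneg _) h2
  _ = ‖D x‖ ^ 2 * ‖f‖ ^ 2 := by ring
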